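/- Let F : D → M_{n×n}(ℂ) be defined by F(x) = Σ_{k=0}^p A_k x^k for fixed matrices A_0,…,A_p ∈ M_{n×n}(ℂ), where D ⊆ ℂ. Let Z(D) = {x ∈ D : F(x) has a repeated eigenvalue}. Then either Z(D) = D or Z(D) is finite. -/
import Mathlib

open Finset

/-- if `F x = ∑_{k=0}^p A_k x^k` is a matrix polynomial on `D ⊆ ℂ`,
then the set of `x ∈ D` where `F x` has a repeated eigenvalue is either all of
`D` or finite. -/
theorem repeated_eigenvalue_matrix_polynomial (n p : ℕ) (D : Set ℂ)
    (A : ℕ → Matrix (Fin n) (Fin n) ℂ)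
    (F : ℂ → Matrix (Fin n) (Fin n) ℂ)
    (hF : ∀ x, F x = ∑ k ∈ Finset.range (p + 1), x ^ k • A k) :
    {x ∈ D | ¬ (F x).charpoly.roots.Nodup} = D ∨
      {x ∈ D | ¬ (F x).charpoly.roots.Nodup}.Finite := by
  classical
  set R := Polynomial ℂ
  set K := FractionRing R
  set φ : R →+* K := algebraMap R K with hφ
  have hinj : Function.Injective φ := IsFractionRing.injective R K
  have hpinj : Function.Injective (Polynomial.map φ) := Polynomial.map_injective φ hinj
  -- the matrix polynomial as a matrix over `ℂ[X]`
  set M : Matrix (Fin n) (Fin n) R :=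
    ∑ k ∈ Finset.range (p + 1), (Polynomial.X : R) ^ k • (A k).map Polynomial.C with hM
  set P : Polynomial R := M.charpoly with hP
  have hPmonic : P.Monic := M.charpoly_monic
  -- evaluation of `P` gives the characteristic polynomial of `F x`
  have hPx : ∀ x : ℂ, (F x).charpoly = P.map (Polynomial.evalRingHom x) := by
    intro x
    have hMx : M.map (Polynomial.evalRingHom x) = F x := by
      ext i j
      simp [hM, hF, Matrix.map_apply, Matrix.sum_apply, Matrix.smul_apply, smul_eq_mul,
        Polynomial.eval_finset_sum]
      exact Finset.sum_congr rfl fun k _ => mul_comm _ _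
    rw [← hMx, Matrix.charpoly_map]
  -- helper : scalar multiplication by `R` on `K[X]`
  have hsm : ∀ (r : R) (w : Polynomial K), r • w = Polynomial.C (φ r) * w := by
    intro r w
    rw [← Polynomial.smul_eq_C_mul, algebraMap_smul]
  by_cases hco : IsCoprime (P.map φ) ((Polynomial.derivative P).map φ)
  · -- coprime over the fraction field : the bad set is finite
    right
    obtain ⟨u, v, huv⟩ := hco
    obtain ⟨s, hs⟩ :=
      IsLocalization.integerNormalization_map_to_map (nonZeroDivisors R) u
    obtain ⟨t, ht⟩ :=
      IsLocalization.integerNormalization_map_to_map (nonZeroDivisors R) v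
    set a : Polynomial R :=
      Polynomial.C (t : R) * IsLocalization.integerNormalization (nonZeroDivisors R) u with ha
    set b : Polynomial R :=
      Polynomial.C (s : R) * IsLocalization.integerNormalization (nonZeroDivisors R) v with hb
    set d : R := (s : R) * (t : R) with hd
    have hdne : d ≠ 0 :=
      mul_ne_zero (nonZeroDivisors.coe_ne_zero s) (nonZeroDivisors.coe_ne_zero t)
    rw [← hφ] at hs ht
    have key : a * P + b * Polynomial.derivative P = Polynomial.C d := by
      apply hpinj
      simp only [ha, hb, Polynomial.map_add, Polynomial.map_mul, Polynomial.map_C]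
      rw [hs, ht, hsm, hsm, hd, map_mul, Polynomial.C_mul]
      linear_combination (Polynomial.C (φ (s : R)) * Polynomial.C (φ (t : R))) * huv
    refine Set.Finite.subset (Polynomial.finite_setOf_isRoot hdne) ?_
    rintro x ⟨hxD, hxbad⟩
    by_contra hroot
    apply hxbad
    have c_ne : d.eval x ≠ 0 := hroot
    have keyx := congrArg (Polynomial.map (Polynomial.evalRingHom x)) key
    simp only [Polynomial.map_add, Polynomial.map_mul, Polynomial.map_C,
      Polynomial.coe_evalRingHom] at keyx
    have hcc : Polynomial.C (d.eval x)⁻¹ * Polynomial.C (d.eval x) = (1 : Polynomial ℂ) := by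
      rw [← Polynomial.C_mul, inv_mul_cancel₀ c_ne, Polynomial.C_1]
    have hsep : (P.map (Polynomial.evalRingHom x)).Separable := by
      refine ⟨Polynomial.C (d.eval x)⁻¹ * (a.map (Polynomial.evalRingHom x)),
        Polynomial.C (d.eval x)⁻¹ * (b.map (Polynomial.evalRingHom x)), ?_⟩
      rw [Polynomial.derivative_map]
      linear_combination Polynomial.C (d.eval x)⁻¹ * keyx + hcc
    rw [hPx x]
    exact Polynomial.nodup_roots hsep
  · -- not coprime : common factor, so every `x` gives a repeated eigenvalue
    left
    rw [Set.sep_eq_self_iff_mem_true]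
    intro x hxD
    -- extract a common monic nonconstant factor `d₀ ∈ R[X]`
    set g : Polynomial K :=
      EuclideanDomain.gcd (P.map φ) ((Polynomial.derivative P).map φ) with hg
    have hg1 : g ∣ P.map φ := EuclideanDomain.gcd_dvd_left _ _
    have hg2 : g ∣ (Polynomial.derivative P).map φ := EuclideanDomain.gcd_dvd_right _ _
    have hgu : ¬IsUnit g := fun h => hco (EuclideanDomain.gcd_isUnit_iff.mp h)
    have hgne : g ≠ 0 := by
      intro h
      rw [hg, EuclideanDomain.gcd_eq_zero_iff] at h
      exact (hPmonic.map φ).ne_zero h.1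
    have hgdeg : g.degree ≠ 0 := fun h => hgu (Polynomial.isUnit_iff_degree_eq_zero.mpr h)
    obtain ⟨d₀, hd₀⟩ := IsIntegrallyClosed.eq_map_mul_C_of_dvd K hPmonic hg1
    rw [← hφ] at hd₀
    have hlcne : g.leadingCoeff ≠ 0 := Polynomial.leadingCoeff_ne_zero.mpr hgne
    have hmap : d₀.map φ = g * Polynomial.C g.leadingCoeff⁻¹ := by
      have h2 : g * Polynomial.C g.leadingCoeff⁻¹ * Polynomial.C g.leadingCoeff = g := by
        rw [mul_assoc, ← Polynomial.C_mul, inv_mul_cancel₀ hlcne, Polynomial.C_1, mul_one]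
      exact mul_right_cancel₀ (Polynomial.C_ne_zero.mpr hlcne) (hd₀.trans h2.symm)
    have hmapmonic : (d₀.map φ).Monic := by
      rw [hmap]; exact Polynomial.monic_mul_leadingCoeff_inv hgne
    have hd₀monic : d₀.Monic := Polynomial.monic_of_injective hinj hmapmonic
    have hmapdvdg : d₀.map φ ∣ g := ⟨Polynomial.C g.leadingCoeff, hd₀.symm⟩
    have hdvd1 : d₀ ∣ P :=
      (Polynomial.map_dvd_map φ hinj hd₀monic).mp (hmapdvdg.trans hg1)
    have hdvd2 : d₀ ∣ Polynomial.derivative P :=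
      (Polynomial.map_dvd_map φ hinj hd₀monic).mp (hmapdvdg.trans hg2)
    have hd₀deg : d₀.degree ≠ 0 := by
      intro h
      apply hgdeg
      have h1 : (d₀.map φ).degree = d₀.degree := hd₀monic.degree_map φ
      have h2 : (d₀.map φ).degree = g.degree := by
        rw [hmap, Polynomial.degree_mul_leadingCoeff_inv g hgne]
      rw [← h2, h1, h]
    -- evaluate at `x`
    set ev : R →+* ℂ := Polynomial.evalRingHom x with hev
    have hqmonic : (d₀.map ev).Monic := hd₀monic.map ev
    have hqdeg : (d₀.map ev).degree ≠ 0 := by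
      rw [hd₀monic.degree_map ev]; exact hd₀deg
    obtain ⟨z, hz⟩ := Complex.isAlgClosed.exists_root (d₀.map ev) hqdeg
    have hz1 : (P.map ev).IsRoot z :=
      hz.dvd (Polynomial.map_dvd ev hdvd1)
    have hz2 : ((Polynomial.derivative P).map ev).IsRoot z :=
      hz.dvd (Polynomial.map_dvd ev hdvd2)
    have hnsep : ¬(P.map ev).Separable := by
      rintro ⟨u, v, huv⟩
      have := congrArg (Polynomial.eval z) huv
      rw [Polynomial.derivative_map] at this
      simp [Polynomial.eval_add, Polynomial.eval_mul, hz1.eq_zero, hz2.eq_zero] at this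
    rw [hPx x]
    intro hnodup
    exact hnsep ((Polynomial.nodup_roots_iff_of_splits (hPmonic.map ev).ne_zero
      (IsAlgClosed.splits _)).mp hnodup)
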